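/- Any triangular combinatorial embedding of the complete graph K7 (a rotation system on K7 all of whose traced faces are triangles) is isomorphic, as a combinatorial embedding, to the classical toroidal embedding with rotation ρ_x(y) = 5y − 4x (mod 7); in particular its 14 triangular faces are exactly the blocks of the two orthogonal Fano planes { {i,i+1,i+3} } and { {i,i+1,i+5} } (i ∈ Z/7). -/
import Mathlib

set_option maxRecDepth 4000

/-- A Steiner triple system: every block has 3 points and every pair of
distinct points lies in exactly one block. -/
def IsSteiner {V : Type*} [DecidableEq V] (B : Finset (Finset V)) : Prop :=
  (∀ b ∈ B, b.card = 3) ∧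
  ∀ x y : V, x ≠ y → ∃! b : Finset V, b ∈ B ∧ x ∈ b ∧ y ∈ b

/-- A Fano plane: a Steiner triple system on a 7-point set. -/
def IsFano {V : Type*} [DecidableEq V] [Fintype V] (B : Finset (Finset V)) : Prop :=
  Fintype.card V = 7 ∧ IsSteiner B

/-- Two systems on the same point set are disjoint if they share no block. -/
def DisjointSTS {V : Type*} [DecidableEq V] (B1 B2 : Finset (Finset V)) : Prop :=
  ∀ b : Finset V, ¬ (b ∈ B1 ∧ b ∈ B2)

/-- Orthogonality of two Steiner triple systems: disjoint, and two distinct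
pairs lying in blocks of the first system with a common third point never have
the same third point in the second system. -/
def OrthogonalSTS {V : Type*} [DecidableEq V] (B1 B2 : Finset (Finset V)) : Prop :=
  DisjointSTS B1 B2 ∧
  ∀ x y z u v a b : V, ({x, y} : Finset V) ≠ ({u, v} : Finset V) →
    ({x, y, z} : Finset V) ∈ B1 → ({u, v, z} : Finset V) ∈ B1 →
    ({x, y, a} : Finset V) ∈ B2 → ({u, v, b} : Finset V) ∈ B2 → a ≠ b

/-- The Fano plane on `ZMod 7` with blocks `{i, i+1, i+3}`. -/
def fanoB1 : Finset (Finset (ZMod 7)) :=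
  Finset.univ.image (fun i : ZMod 7 => ({i, i + 1, i + 3} : Finset (ZMod 7)))

/-- The Fano plane on `ZMod 7` with blocks `{i, i+1, i+5}`. -/
def fanoB2 : Finset (Finset (ZMod 7)) :=
  Finset.univ.image (fun i : ZMod 7 => ({i, i + 1, i + 5} : Finset (ZMod 7)))

/-- A rotation system on `K7` (vertex set `ZMod 7`): to each vertex `x` is assigned a
permutation fixing `x` and acting as a single 6-cycle on the remaining vertices. -/
def IsRotationK7 (ρ : ZMod 7 → Equiv.Perm (ZMod 7)) : Prop :=
  ∀ x : ZMod 7, ρ x x = x ∧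
    ∀ y : ZMod 7, y ≠ x → (ρ x y ≠ x ∧ ∀ z : ZMod 7, z ≠ x → ∃ k : ℕ, ((ρ x) ^ k) y = z)

/-- The permutation `y ↦ 5y` of `ZMod 7`. -/
def mul5 : Equiv.Perm (ZMod 7) :=
  ⟨fun y => 5 * y, fun y => 3 * y, by decide, by decide⟩

/-- The rotation of the classical toroidal embedding of `K7`: `ρ_x(y) = 5y - 4x`. -/
def rhoClass (x : ZMod 7) : Equiv.Perm (ZMod 7) := mul5.trans (Equiv.addLeft (-(4 * x)))

/- ——— auxiliary machinery ——— -/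

/-- discrete log base the cycle (1 5 4 6 2 3) -/
def dlog (x : ZMod 7) : ℕ := [0, 0, 4, 5, 2, 1, 3].getD x.val 0

/-- the mirror-type solution table -/
def mirF (x y : ZMod 7) : ZMod 7 :=
  ((([[0,5,3,1,6,4,2],[3,1,5,6,2,0,4],[6,4,2,0,3,1,5],[2,0,4,3,5,6,1],
      [5,6,1,2,4,3,0],[1,2,6,4,0,5,3],[4,3,0,5,1,2,6]] : List (List (ZMod 7))).getD
      x.val []).getD y.val 0)

def piMirFun : ZMod 7 → ZMod 7 := fun x => ([0,1,4,5,2,3,6] : List (ZMod 7)).getD x.val 0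

def piMir : Equiv.Perm (ZMod 7) := ⟨piMirFun, piMirFun, by decide, by decide⟩

lemma bridgeB : ∀ x y : ZMod 7, piMir (mirF x y) = (rhoClass (piMir x))⁻¹ (piMir y) := by
  decide

lemma faceA : ∀ u v : ZMod 7, u ≠ v →
    ({u, v, rhoClass u v} : Finset (ZMod 7)) ∈ fanoB1 ∪ fanoB2 := by decide

lemma surjA : ∀ t ∈ fanoB1 ∪ fanoB2, ∃ u v : ZMod 7, u ≠ v ∧
    ({u, v, rhoClass u v} : Finset (ZMod 7)) = t := by decide

lemma faceB : ∀ u v : ZMod 7, u ≠ v →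
    ({u, v, (rhoClass u)⁻¹ v} : Finset (ZMod 7)) ∈ fanoB1 ∪ fanoB2 := by decide

lemma surjB : ∀ t ∈ fanoB1 ∪ fanoB2, ∃ u v : ZMod 7, u ≠ v ∧
    ({u, v, (rhoClass u)⁻¹ v} : Finset (ZMod 7)) = t := by decide

lemma key (R : ZMod 7 → ZMod 7 → ZMod 7)
    (fix : ∀ a, R a a = a)
    (nfix : ∀ a b, a ≠ b → R a b ≠ a)
    (inj : ∀ a b c, R a b = R a c → b = c)
    (step : ∀ a b c, a ≠ b → R a b = c → R c a = b)
    (base : ∀ y, R 0 y = 5 * y) :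
    (∀ x y, R x y = rhoClass x y) ∨ (∀ x y, R x y = mirF x y) := by
  have seven : ∀ z : ZMod 7, z = 0 ∨ z = 1 ∨ z = 2 ∨ z = 3 ∨ z = 4 ∨ z = 5 ∨ z = 6 := by decide
  have t00 : R 0 0 = 0 := fix 0
  have t11 : R 1 1 = 1 := fix 1
  have t22 : R 2 2 = 2 := fix 2
  have t33 : R 3 3 = 3 := fix 3
  have t44 : R 4 4 = 4 := fix 4
  have t55 : R 5 5 = 5 := fix 5
  have t66 : R 6 6 = 6 := fix 6
  have t01 : R 0 1 = 5 := (base 1).trans (by decide)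
  have t02 : R 0 2 = 3 := (base 2).trans (by decide)
  have t03 : R 0 3 = 1 := (base 3).trans (by decide)
  have t04 : R 0 4 = 6 := (base 4).trans (by decide)
  have t05 : R 0 5 = 4 := (base 5).trans (by decide)
  have t06 : R 0 6 = 2 := (base 6).trans (by decide)
  have t20 : R 2 0 = 6 := step 0 6 2 (by decide) t06
  have t62 : R 6 2 = 0 := step 2 0 6 (by decide) t20
  have t40 : R 4 0 = 5 := step 0 5 4 (by decide) t05
  have t54 : R 5 4 = 0 := step 4 0 5 (by decide) t40
  have t60 : R 6 0 = 4 := step 0 4 6 (by decide) t04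
  have t46 : R 4 6 = 0 := step 6 0 4 (by decide) t60
  have t10 : R 1 0 = 3 := step 0 3 1 (by decide) t03
  have t31 : R 3 1 = 0 := step 1 0 3 (by decide) t10
  have t30 : R 3 0 = 2 := step 0 2 3 (by decide) t02
  have t23 : R 2 3 = 0 := step 3 0 2 (by decide) t30
  have t50 : R 5 0 = 1 := step 0 1 5 (by decide) t01
  have t15 : R 1 5 = 0 := step 5 0 1 (by decide) t50
  rcases seven (R 1 2) with t12|t12|t12|t12|t12|t12|t12
  · -- R 1 2 = 0
    have u0 : R 1 2 = 0 := t12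
    exact absurd (inj 1 2 5 (u0.trans t15.symm)) (by decide)
  · -- R 1 2 = 1
    have u1 : R 1 2 = 1 := t12
    exact absurd u1 (nfix 1 2 (by decide))
  · -- R 1 2 = 2
    have t12 : R 1 2 = 2 := t12
    have u2 : R 2 1 = 2 := step 1 2 2 (by decide) t12
    exact absurd u2 (nfix 2 1 (by decide))
  · -- R 1 2 = 3
    have u3 : R 1 2 = 3 := t12
    exact absurd (inj 1 2 0 (u3.trans t10.symm)) (by decide)
  · -- R 1 2 = 4
    have t12 : R 1 2 = 4 := t12
    have t41 : R 4 1 = 2 := step 1 2 4 (by decide) t12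
    have t24 : R 2 4 = 1 := step 4 1 2 (by decide) t41
    rcases seven (R 1 3) with t13|t13|t13|t13|t13|t13|t13
    · -- R 1 3 = 0
      have u4 : R 1 3 = 0 := t13
      exact absurd (inj 1 3 5 (u4.trans t15.symm)) (by decide)
    · -- R 1 3 = 1
      have u5 : R 1 3 = 1 := t13
      exact absurd u5 (nfix 1 3 (by decide))
    · -- R 1 3 = 2
      have t13 : R 1 3 = 2 := t13
      have t21 : R 2 1 = 3 := step 1 3 2 (by decide) t13
      have t32 : R 3 2 = 1 := step 2 1 3 (by decide) t21
      rcases seven (R 1 4) with t14|t14|t14|t14|t14|t14|t14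
      · -- R 1 4 = 0
        have u6 : R 1 4 = 0 := t14
        exact absurd (inj 1 4 5 (u6.trans t15.symm)) (by decide)
      · -- R 1 4 = 1
        have u7 : R 1 4 = 1 := t14
        exact absurd u7 (nfix 1 4 (by decide))
      · -- R 1 4 = 2
        have u8 : R 1 4 = 2 := t14
        exact absurd (inj 1 4 3 (u8.trans t13.symm)) (by decide)
      · -- R 1 4 = 3
        have u9 : R 1 4 = 3 := t14
        exact absurd (inj 1 4 0 (u9.trans t10.symm)) (by decide)
      · -- R 1 4 = 4
        have u10 : R 1 4 = 4 := t14
        exact absurd (inj 1 4 2 (u10.trans t12.symm)) (by decide)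
      · -- R 1 4 = 5
        have t14 : R 1 4 = 5 := t14
        have t51 : R 5 1 = 4 := step 1 4 5 (by decide) t14
        have t45 : R 4 5 = 1 := step 5 1 4 (by decide) t51
        rcases seven (R 1 6) with t16|t16|t16|t16|t16|t16|t16
        · -- R 1 6 = 0
          have u11 : R 1 6 = 0 := t16
          exact absurd (inj 1 6 5 (u11.trans t15.symm)) (by decide)
        · -- R 1 6 = 1
          have u12 : R 1 6 = 1 := t16
          exact absurd u12 (nfix 1 6 (by decide))
        · -- R 1 6 = 2
          have u13 : R 1 6 = 2 := t16
          exact absurd (inj 1 6 3 (u13.trans t13.symm)) (by decide)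
        · -- R 1 6 = 3
          have u14 : R 1 6 = 3 := t16
          exact absurd (inj 1 6 0 (u14.trans t10.symm)) (by decide)
        · -- R 1 6 = 4
          have u15 : R 1 6 = 4 := t16
          exact absurd (inj 1 6 2 (u15.trans t12.symm)) (by decide)
        · -- R 1 6 = 5
          have u16 : R 1 6 = 5 := t16
          exact absurd (inj 1 6 4 (u16.trans t14.symm)) (by decide)
        · -- R 1 6 = 6
          have t16 : R 1 6 = 6 := t16
          have u17 : R 6 1 = 6 := step 1 6 6 (by decide) t16
          exact absurd u17 (nfix 6 1 (by decide))
      · -- R 1 4 = 6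
        have t14 : R 1 4 = 6 := t14
        have u18 : R 6 1 = 4 := step 1 4 6 (by decide) t14
        exact absurd (inj 6 1 0 (u18.trans t60.symm)) (by decide)
    · -- R 1 3 = 3
      have u19 : R 1 3 = 3 := t13
      exact absurd (inj 1 3 0 (u19.trans t10.symm)) (by decide)
    · -- R 1 3 = 4
      have u20 : R 1 3 = 4 := t13
      exact absurd (inj 1 3 2 (u20.trans t12.symm)) (by decide)
    · -- R 1 3 = 5
      have t13 : R 1 3 = 5 := t13
      have t51 : R 5 1 = 3 := step 1 3 5 (by decide) t13
      have t35 : R 3 5 = 1 := step 5 1 3 (by decide) t51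
      rcases seven (R 1 4) with t14|t14|t14|t14|t14|t14|t14
      · -- R 1 4 = 0
        have u21 : R 1 4 = 0 := t14
        exact absurd (inj 1 4 5 (u21.trans t15.symm)) (by decide)
      · -- R 1 4 = 1
        have u22 : R 1 4 = 1 := t14
        exact absurd u22 (nfix 1 4 (by decide))
      · -- R 1 4 = 2
        have t14 : R 1 4 = 2 := t14
        have t21 : R 2 1 = 4 := step 1 4 2 (by decide) t14
        have t42 : R 4 2 = 1 := step 2 1 4 (by decide) t21
        rcases seven (R 1 6) with t16|t16|t16|t16|t16|t16|t16
        · -- R 1 6 = 0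
          have u23 : R 1 6 = 0 := t16
          exact absurd (inj 1 6 5 (u23.trans t15.symm)) (by decide)
        · -- R 1 6 = 1
          have u24 : R 1 6 = 1 := t16
          exact absurd u24 (nfix 1 6 (by decide))
        · -- R 1 6 = 2
          have u25 : R 1 6 = 2 := t16
          exact absurd (inj 1 6 4 (u25.trans t14.symm)) (by decide)
        · -- R 1 6 = 3
          have u26 : R 1 6 = 3 := t16
          exact absurd (inj 1 6 0 (u26.trans t10.symm)) (by decide)
        · -- R 1 6 = 4
          have u27 : R 1 6 = 4 := t16
          exact absurd (inj 1 6 2 (u27.trans t12.symm)) (by decide)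
        · -- R 1 6 = 5
          have u28 : R 1 6 = 5 := t16
          exact absurd (inj 1 6 3 (u28.trans t13.symm)) (by decide)
        · -- R 1 6 = 6
          have t16 : R 1 6 = 6 := t16
          have u29 : R 6 1 = 6 := step 1 6 6 (by decide) t16
          exact absurd u29 (nfix 6 1 (by decide))
      · -- R 1 4 = 3
        have u30 : R 1 4 = 3 := t14
        exact absurd (inj 1 4 0 (u30.trans t10.symm)) (by decide)
      · -- R 1 4 = 4
        have u31 : R 1 4 = 4 := t14
        exact absurd (inj 1 4 2 (u31.trans t12.symm)) (by decide)
      · -- R 1 4 = 5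
        have u32 : R 1 4 = 5 := t14
        exact absurd (inj 1 4 3 (u32.trans t13.symm)) (by decide)
      · -- R 1 4 = 6
        have t14 : R 1 4 = 6 := t14
        have u33 : R 6 1 = 4 := step 1 4 6 (by decide) t14
        exact absurd (inj 6 1 0 (u33.trans t60.symm)) (by decide)
    · -- R 1 3 = 6
      have t13 : R 1 3 = 6 := t13
      have t61 : R 6 1 = 3 := step 1 3 6 (by decide) t13
      have t36 : R 3 6 = 1 := step 6 1 3 (by decide) t61
      rcases seven (R 1 4) with t14|t14|t14|t14|t14|t14|t14
      · -- R 1 4 = 0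
        have u34 : R 1 4 = 0 := t14
        exact absurd (inj 1 4 5 (u34.trans t15.symm)) (by decide)
      · -- R 1 4 = 1
        have u35 : R 1 4 = 1 := t14
        exact absurd u35 (nfix 1 4 (by decide))
      · -- R 1 4 = 2
        have t14 : R 1 4 = 2 := t14
        have t21 : R 2 1 = 4 := step 1 4 2 (by decide) t14
        have t42 : R 4 2 = 1 := step 2 1 4 (by decide) t21
        rcases seven (R 1 6) with t16|t16|t16|t16|t16|t16|t16
        · -- R 1 6 = 0
          have u36 : R 1 6 = 0 := t16
          exact absurd (inj 1 6 5 (u36.trans t15.symm)) (by decide)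
        · -- R 1 6 = 1
          have u37 : R 1 6 = 1 := t16
          exact absurd u37 (nfix 1 6 (by decide))
        · -- R 1 6 = 2
          have u38 : R 1 6 = 2 := t16
          exact absurd (inj 1 6 4 (u38.trans t14.symm)) (by decide)
        · -- R 1 6 = 3
          have u39 : R 1 6 = 3 := t16
          exact absurd (inj 1 6 0 (u39.trans t10.symm)) (by decide)
        · -- R 1 6 = 4
          have u40 : R 1 6 = 4 := t16
          exact absurd (inj 1 6 2 (u40.trans t12.symm)) (by decide)
        · -- R 1 6 = 5
          have t16 : R 1 6 = 5 := t16
          have t51 : R 5 1 = 6 := step 1 6 5 (by decide) t16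
          have t65 : R 6 5 = 1 := step 5 1 6 (by decide) t51
          rcases seven (R 2 5) with t25|t25|t25|t25|t25|t25|t25
          · -- R 2 5 = 0
            have u41 : R 2 5 = 0 := t25
            exact absurd (inj 2 5 3 (u41.trans t23.symm)) (by decide)
          · -- R 2 5 = 1
            have u42 : R 2 5 = 1 := t25
            exact absurd (inj 2 5 4 (u42.trans t24.symm)) (by decide)
          · -- R 2 5 = 2
            have u43 : R 2 5 = 2 := t25
            exact absurd u43 (nfix 2 5 (by decide))
          · -- R 2 5 = 3
            have t25 : R 2 5 = 3 := t25
            have t32 : R 3 2 = 5 := step 2 5 3 (by decide) t25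
            have t53 : R 5 3 = 2 := step 3 2 5 (by decide) t32
            rcases seven (R 2 6) with t26|t26|t26|t26|t26|t26|t26
            · -- R 2 6 = 0
              have u44 : R 2 6 = 0 := t26
              exact absurd (inj 2 6 3 (u44.trans t23.symm)) (by decide)
            · -- R 2 6 = 1
              have u45 : R 2 6 = 1 := t26
              exact absurd (inj 2 6 4 (u45.trans t24.symm)) (by decide)
            · -- R 2 6 = 2
              have u46 : R 2 6 = 2 := t26
              exact absurd u46 (nfix 2 6 (by decide))
            · -- R 2 6 = 3
              have u47 : R 2 6 = 3 := t26
              exact absurd (inj 2 6 5 (u47.trans t25.symm)) (by decide)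
            · -- R 2 6 = 4
              have u48 : R 2 6 = 4 := t26
              exact absurd (inj 2 6 1 (u48.trans t21.symm)) (by decide)
            · -- R 2 6 = 5
              have t26 : R 2 6 = 5 := t26
              have u49 : R 5 2 = 6 := step 2 6 5 (by decide) t26
              exact absurd (inj 5 2 1 (u49.trans t51.symm)) (by decide)
            · -- R 2 6 = 6
              have u50 : R 2 6 = 6 := t26
              exact absurd (inj 2 6 0 (u50.trans t20.symm)) (by decide)
          · -- R 2 5 = 4
            have u51 : R 2 5 = 4 := t25
            exact absurd (inj 2 5 1 (u51.trans t21.symm)) (by decide)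
          · -- R 2 5 = 5
            have t25 : R 2 5 = 5 := t25
            have u52 : R 5 2 = 5 := step 2 5 5 (by decide) t25
            exact absurd u52 (nfix 5 2 (by decide))
          · -- R 2 5 = 6
            have u53 : R 2 5 = 6 := t25
            exact absurd (inj 2 5 0 (u53.trans t20.symm)) (by decide)
        · -- R 1 6 = 6
          have u54 : R 1 6 = 6 := t16
          exact absurd (inj 1 6 3 (u54.trans t13.symm)) (by decide)
      · -- R 1 4 = 3
        have u55 : R 1 4 = 3 := t14
        exact absurd (inj 1 4 0 (u55.trans t10.symm)) (by decide)
      · -- R 1 4 = 4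
        have u56 : R 1 4 = 4 := t14
        exact absurd (inj 1 4 2 (u56.trans t12.symm)) (by decide)
      · -- R 1 4 = 5
        have t14 : R 1 4 = 5 := t14
        have t51 : R 5 1 = 4 := step 1 4 5 (by decide) t14
        have t45 : R 4 5 = 1 := step 5 1 4 (by decide) t51
        rcases seven (R 1 6) with t16|t16|t16|t16|t16|t16|t16
        · -- R 1 6 = 0
          have u57 : R 1 6 = 0 := t16
          exact absurd (inj 1 6 5 (u57.trans t15.symm)) (by decide)
        · -- R 1 6 = 1
          have u58 : R 1 6 = 1 := t16
          exact absurd u58 (nfix 1 6 (by decide))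
        · -- R 1 6 = 2
          have t16 : R 1 6 = 2 := t16
          have u59 : R 2 1 = 6 := step 1 6 2 (by decide) t16
          exact absurd (inj 2 1 0 (u59.trans t20.symm)) (by decide)
        · -- R 1 6 = 3
          have u60 : R 1 6 = 3 := t16
          exact absurd (inj 1 6 0 (u60.trans t10.symm)) (by decide)
        · -- R 1 6 = 4
          have u61 : R 1 6 = 4 := t16
          exact absurd (inj 1 6 2 (u61.trans t12.symm)) (by decide)
        · -- R 1 6 = 5
          have u62 : R 1 6 = 5 := t16
          exact absurd (inj 1 6 4 (u62.trans t14.symm)) (by decide)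
        · -- R 1 6 = 6
          have u63 : R 1 6 = 6 := t16
          exact absurd (inj 1 6 3 (u63.trans t13.symm)) (by decide)
      · -- R 1 4 = 6
        have u64 : R 1 4 = 6 := t14
        exact absurd (inj 1 4 3 (u64.trans t13.symm)) (by decide)
  · -- R 1 2 = 5
    have t12 : R 1 2 = 5 := t12
    have t51 : R 5 1 = 2 := step 1 2 5 (by decide) t12
    have t25 : R 2 5 = 1 := step 5 1 2 (by decide) t51
    rcases seven (R 1 3) with t13|t13|t13|t13|t13|t13|t13
    · -- R 1 3 = 0
      have u65 : R 1 3 = 0 := t13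
      exact absurd (inj 1 3 5 (u65.trans t15.symm)) (by decide)
    · -- R 1 3 = 1
      have u66 : R 1 3 = 1 := t13
      exact absurd u66 (nfix 1 3 (by decide))
    · -- R 1 3 = 2
      have t13 : R 1 3 = 2 := t13
      have t21 : R 2 1 = 3 := step 1 3 2 (by decide) t13
      have t32 : R 3 2 = 1 := step 2 1 3 (by decide) t21
      rcases seven (R 1 4) with t14|t14|t14|t14|t14|t14|t14
      · -- R 1 4 = 0
        have u67 : R 1 4 = 0 := t14
        exact absurd (inj 1 4 5 (u67.trans t15.symm)) (by decide)
      · -- R 1 4 = 1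
        have u68 : R 1 4 = 1 := t14
        exact absurd u68 (nfix 1 4 (by decide))
      · -- R 1 4 = 2
        have u69 : R 1 4 = 2 := t14
        exact absurd (inj 1 4 3 (u69.trans t13.symm)) (by decide)
      · -- R 1 4 = 3
        have u70 : R 1 4 = 3 := t14
        exact absurd (inj 1 4 0 (u70.trans t10.symm)) (by decide)
      · -- R 1 4 = 4
        have t14 : R 1 4 = 4 := t14
        have u71 : R 4 1 = 4 := step 1 4 4 (by decide) t14
        exact absurd u71 (nfix 4 1 (by decide))
      · -- R 1 4 = 5
        have u72 : R 1 4 = 5 := t14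
        exact absurd (inj 1 4 2 (u72.trans t12.symm)) (by decide)
      · -- R 1 4 = 6
        have t14 : R 1 4 = 6 := t14
        have u73 : R 6 1 = 4 := step 1 4 6 (by decide) t14
        exact absurd (inj 6 1 0 (u73.trans t60.symm)) (by decide)
    · -- R 1 3 = 3
      have u74 : R 1 3 = 3 := t13
      exact absurd (inj 1 3 0 (u74.trans t10.symm)) (by decide)
    · -- R 1 3 = 4
      have t13 : R 1 3 = 4 := t13
      have t41 : R 4 1 = 3 := step 1 3 4 (by decide) t13
      have t34 : R 3 4 = 1 := step 4 1 3 (by decide) t41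
      rcases seven (R 1 4) with t14|t14|t14|t14|t14|t14|t14
      · -- R 1 4 = 0
        have u75 : R 1 4 = 0 := t14
        exact absurd (inj 1 4 5 (u75.trans t15.symm)) (by decide)
      · -- R 1 4 = 1
        have u76 : R 1 4 = 1 := t14
        exact absurd u76 (nfix 1 4 (by decide))
      · -- R 1 4 = 2
        have t14 : R 1 4 = 2 := t14
        have t21 : R 2 1 = 4 := step 1 4 2 (by decide) t14
        have t42 : R 4 2 = 1 := step 2 1 4 (by decide) t21
        rcases seven (R 1 6) with t16|t16|t16|t16|t16|t16|t16
        · -- R 1 6 = 0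
          have u77 : R 1 6 = 0 := t16
          exact absurd (inj 1 6 5 (u77.trans t15.symm)) (by decide)
        · -- R 1 6 = 1
          have u78 : R 1 6 = 1 := t16
          exact absurd u78 (nfix 1 6 (by decide))
        · -- R 1 6 = 2
          have u79 : R 1 6 = 2 := t16
          exact absurd (inj 1 6 4 (u79.trans t14.symm)) (by decide)
        · -- R 1 6 = 3
          have u80 : R 1 6 = 3 := t16
          exact absurd (inj 1 6 0 (u80.trans t10.symm)) (by decide)
        · -- R 1 6 = 4
          have u81 : R 1 6 = 4 := t16
          exact absurd (inj 1 6 3 (u81.trans t13.symm)) (by decide)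
        · -- R 1 6 = 5
          have u82 : R 1 6 = 5 := t16
          exact absurd (inj 1 6 2 (u82.trans t12.symm)) (by decide)
        · -- R 1 6 = 6
          have t16 : R 1 6 = 6 := t16
          have u83 : R 6 1 = 6 := step 1 6 6 (by decide) t16
          exact absurd u83 (nfix 6 1 (by decide))
      · -- R 1 4 = 3
        have u84 : R 1 4 = 3 := t14
        exact absurd (inj 1 4 0 (u84.trans t10.symm)) (by decide)
      · -- R 1 4 = 4
        have u85 : R 1 4 = 4 := t14
        exact absurd (inj 1 4 3 (u85.trans t13.symm)) (by decide)
      · -- R 1 4 = 5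
        have u86 : R 1 4 = 5 := t14
        exact absurd (inj 1 4 2 (u86.trans t12.symm)) (by decide)
      · -- R 1 4 = 6
        have t14 : R 1 4 = 6 := t14
        have u87 : R 6 1 = 4 := step 1 4 6 (by decide) t14
        exact absurd (inj 6 1 0 (u87.trans t60.symm)) (by decide)
    · -- R 1 3 = 5
      have u88 : R 1 3 = 5 := t13
      exact absurd (inj 1 3 2 (u88.trans t12.symm)) (by decide)
    · -- R 1 3 = 6
      have t13 : R 1 3 = 6 := t13
      have t61 : R 6 1 = 3 := step 1 3 6 (by decide) t13
      have t36 : R 3 6 = 1 := step 6 1 3 (by decide) t61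
      rcases seven (R 1 4) with t14|t14|t14|t14|t14|t14|t14
      · -- R 1 4 = 0
        have u89 : R 1 4 = 0 := t14
        exact absurd (inj 1 4 5 (u89.trans t15.symm)) (by decide)
      · -- R 1 4 = 1
        have u90 : R 1 4 = 1 := t14
        exact absurd u90 (nfix 1 4 (by decide))
      · -- R 1 4 = 2
        have t14 : R 1 4 = 2 := t14
        have t21 : R 2 1 = 4 := step 1 4 2 (by decide) t14
        have t42 : R 4 2 = 1 := step 2 1 4 (by decide) t21
        rcases seven (R 1 6) with t16|t16|t16|t16|t16|t16|t16
        · -- R 1 6 = 0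
          have u91 : R 1 6 = 0 := t16
          exact absurd (inj 1 6 5 (u91.trans t15.symm)) (by decide)
        · -- R 1 6 = 1
          have u92 : R 1 6 = 1 := t16
          exact absurd u92 (nfix 1 6 (by decide))
        · -- R 1 6 = 2
          have u93 : R 1 6 = 2 := t16
          exact absurd (inj 1 6 4 (u93.trans t14.symm)) (by decide)
        · -- R 1 6 = 3
          have u94 : R 1 6 = 3 := t16
          exact absurd (inj 1 6 0 (u94.trans t10.symm)) (by decide)
        · -- R 1 6 = 4
          have t16 : R 1 6 = 4 := t16
          have t41 : R 4 1 = 6 := step 1 6 4 (by decide) t16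
          have t64 : R 6 4 = 1 := step 4 1 6 (by decide) t41
          rcases seven (R 2 4) with t24|t24|t24|t24|t24|t24|t24
          · -- R 2 4 = 0
            have u95 : R 2 4 = 0 := t24
            exact absurd (inj 2 4 3 (u95.trans t23.symm)) (by decide)
          · -- R 2 4 = 1
            have u96 : R 2 4 = 1 := t24
            exact absurd (inj 2 4 5 (u96.trans t25.symm)) (by decide)
          · -- R 2 4 = 2
            have u97 : R 2 4 = 2 := t24
            exact absurd u97 (nfix 2 4 (by decide))
          · -- R 2 4 = 3
            have t24 : R 2 4 = 3 := t24
            have t32 : R 3 2 = 4 := step 2 4 3 (by decide) t24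
            have t43 : R 4 3 = 2 := step 3 2 4 (by decide) t32
            rcases seven (R 2 6) with t26|t26|t26|t26|t26|t26|t26
            · -- R 2 6 = 0
              have u98 : R 2 6 = 0 := t26
              exact absurd (inj 2 6 3 (u98.trans t23.symm)) (by decide)
            · -- R 2 6 = 1
              have u99 : R 2 6 = 1 := t26
              exact absurd (inj 2 6 5 (u99.trans t25.symm)) (by decide)
            · -- R 2 6 = 2
              have u100 : R 2 6 = 2 := t26
              exact absurd u100 (nfix 2 6 (by decide))
            · -- R 2 6 = 3
              have u101 : R 2 6 = 3 := t26
              exact absurd (inj 2 6 4 (u101.trans t24.symm)) (by decide)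
            · -- R 2 6 = 4
              have u102 : R 2 6 = 4 := t26
              exact absurd (inj 2 6 1 (u102.trans t21.symm)) (by decide)
            · -- R 2 6 = 5
              have t26 : R 2 6 = 5 := t26
              have t52 : R 5 2 = 6 := step 2 6 5 (by decide) t26
              have t65 : R 6 5 = 2 := step 5 2 6 (by decide) t52
              rcases seven (R 3 4) with t34|t34|t34|t34|t34|t34|t34
              · -- R 3 4 = 0
                have u103 : R 3 4 = 0 := t34
                exact absurd (inj 3 4 1 (u103.trans t31.symm)) (by decide)
              · -- R 3 4 = 1
                have u104 : R 3 4 = 1 := t34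
                exact absurd (inj 3 4 6 (u104.trans t36.symm)) (by decide)
              · -- R 3 4 = 2
                have u105 : R 3 4 = 2 := t34
                exact absurd (inj 3 4 0 (u105.trans t30.symm)) (by decide)
              · -- R 3 4 = 3
                have u106 : R 3 4 = 3 := t34
                exact absurd u106 (nfix 3 4 (by decide))
              · -- R 3 4 = 4
                have u107 : R 3 4 = 4 := t34
                exact absurd (inj 3 4 2 (u107.trans t32.symm)) (by decide)
              · -- R 3 4 = 5
                have t34 : R 3 4 = 5 := t34
                have t53 : R 5 3 = 4 := step 3 4 5 (by decide) t34
                have t45 : R 4 5 = 3 := step 5 3 4 (by decide) t53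
                rcases seven (R 3 5) with t35|t35|t35|t35|t35|t35|t35
                · -- R 3 5 = 0
                  have u108 : R 3 5 = 0 := t35
                  exact absurd (inj 3 5 1 (u108.trans t31.symm)) (by decide)
                · -- R 3 5 = 1
                  have u109 : R 3 5 = 1 := t35
                  exact absurd (inj 3 5 6 (u109.trans t36.symm)) (by decide)
                · -- R 3 5 = 2
                  have u110 : R 3 5 = 2 := t35
                  exact absurd (inj 3 5 0 (u110.trans t30.symm)) (by decide)
                · -- R 3 5 = 3
                  have u111 : R 3 5 = 3 := t35
                  exact absurd u111 (nfix 3 5 (by decide))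
                · -- R 3 5 = 4
                  have u112 : R 3 5 = 4 := t35
                  exact absurd (inj 3 5 2 (u112.trans t32.symm)) (by decide)
                · -- R 3 5 = 5
                  have u113 : R 3 5 = 5 := t35
                  exact absurd (inj 3 5 4 (u113.trans t34.symm)) (by decide)
                · -- R 3 5 = 6
                  have t35 : R 3 5 = 6 := t35
                  have t63 : R 6 3 = 5 := step 3 5 6 (by decide) t35
                  have t56 : R 5 6 = 3 := step 6 3 5 (by decide) t63
                  refine Or.inr ?_
                  intro x y
                  rcases seven x with rfl|rfl|rfl|rfl|rfl|rfl|rfl <;>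
                      rcases seven y with rfl|rfl|rfl|rfl|rfl|rfl|rfl
                  · exact t00.trans (by decide)
                  · exact t01.trans (by decide)
                  · exact t02.trans (by decide)
                  · exact t03.trans (by decide)
                  · exact t04.trans (by decide)
                  · exact t05.trans (by decide)
                  · exact t06.trans (by decide)
                  · exact t10.trans (by decide)
                  · exact t11.trans (by decide)
                  · exact t12.trans (by decide)
                  · exact t13.trans (by decide)
                  · exact t14.trans (by decide)
                  · exact t15.trans (by decide)
                  · exact t16.trans (by decide)
                  · exact t20.trans (by decide)
                  · exact t21.trans (by decide)
                  · exact t22.trans (by decide)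
                  · exact t23.trans (by decide)
                  · exact t24.trans (by decide)
                  · exact t25.trans (by decide)
                  · exact t26.trans (by decide)
                  · exact t30.trans (by decide)
                  · exact t31.trans (by decide)
                  · exact t32.trans (by decide)
                  · exact t33.trans (by decide)
                  · exact t34.trans (by decide)
                  · exact t35.trans (by decide)
                  · exact t36.trans (by decide)
                  · exact t40.trans (by decide)
                  · exact t41.trans (by decide)
                  · exact t42.trans (by decide)
                  · exact t43.trans (by decide)
                  · exact t44.trans (by decide)
                  · exact t45.trans (by decide)
                  · exact t46.trans (by decide)
                  · exact t50.trans (by decide)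
                  · exact t51.trans (by decide)
                  · exact t52.trans (by decide)
                  · exact t53.trans (by decide)
                  · exact t54.trans (by decide)
                  · exact t55.trans (by decide)
                  · exact t56.trans (by decide)
                  · exact t60.trans (by decide)
                  · exact t61.trans (by decide)
                  · exact t62.trans (by decide)
                  · exact t63.trans (by decide)
                  · exact t64.trans (by decide)
                  · exact t65.trans (by decide)
                  · exact t66.trans (by decide)
              · -- R 3 4 = 6
                have t34 : R 3 4 = 6 := t34
                have u114 : R 6 3 = 4 := step 3 4 6 (by decide) t34
                exact absurd (inj 6 3 0 (u114.trans t60.symm)) (by decide)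
            · -- R 2 6 = 6
              have u115 : R 2 6 = 6 := t26
              exact absurd (inj 2 6 0 (u115.trans t20.symm)) (by decide)
          · -- R 2 4 = 4
            have u116 : R 2 4 = 4 := t24
            exact absurd (inj 2 4 1 (u116.trans t21.symm)) (by decide)
          · -- R 2 4 = 5
            have t24 : R 2 4 = 5 := t24
            have t52 : R 5 2 = 4 := step 2 4 5 (by decide) t24
            have t45 : R 4 5 = 2 := step 5 2 4 (by decide) t52
            rcases seven (R 2 6) with t26|t26|t26|t26|t26|t26|t26
            · -- R 2 6 = 0
              have u117 : R 2 6 = 0 := t26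
              exact absurd (inj 2 6 3 (u117.trans t23.symm)) (by decide)
            · -- R 2 6 = 1
              have u118 : R 2 6 = 1 := t26
              exact absurd (inj 2 6 5 (u118.trans t25.symm)) (by decide)
            · -- R 2 6 = 2
              have u119 : R 2 6 = 2 := t26
              exact absurd u119 (nfix 2 6 (by decide))
            · -- R 2 6 = 3
              have t26 : R 2 6 = 3 := t26
              have t32 : R 3 2 = 6 := step 2 6 3 (by decide) t26
              have t63 : R 6 3 = 2 := step 3 2 6 (by decide) t32
              rcases seven (R 3 4) with t34|t34|t34|t34|t34|t34|t34
              · -- R 3 4 = 0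
                have u120 : R 3 4 = 0 := t34
                exact absurd (inj 3 4 1 (u120.trans t31.symm)) (by decide)
              · -- R 3 4 = 1
                have u121 : R 3 4 = 1 := t34
                exact absurd (inj 3 4 6 (u121.trans t36.symm)) (by decide)
              · -- R 3 4 = 2
                have u122 : R 3 4 = 2 := t34
                exact absurd (inj 3 4 0 (u122.trans t30.symm)) (by decide)
              · -- R 3 4 = 3
                have u123 : R 3 4 = 3 := t34
                exact absurd u123 (nfix 3 4 (by decide))
              · -- R 3 4 = 4
                have t34 : R 3 4 = 4 := t34
                have u124 : R 4 3 = 4 := step 3 4 4 (by decide) t34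
                exact absurd u124 (nfix 4 3 (by decide))
              · -- R 3 4 = 5
                have t34 : R 3 4 = 5 := t34
                have u125 : R 5 3 = 4 := step 3 4 5 (by decide) t34
                exact absurd (inj 5 3 2 (u125.trans t52.symm)) (by decide)
              · -- R 3 4 = 6
                have u126 : R 3 4 = 6 := t34
                exact absurd (inj 3 4 2 (u126.trans t32.symm)) (by decide)
            · -- R 2 6 = 4
              have u127 : R 2 6 = 4 := t26
              exact absurd (inj 2 6 1 (u127.trans t21.symm)) (by decide)
            · -- R 2 6 = 5
              have u128 : R 2 6 = 5 := t26
              exact absurd (inj 2 6 4 (u128.trans t24.symm)) (by decide)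
            · -- R 2 6 = 6
              have u129 : R 2 6 = 6 := t26
              exact absurd (inj 2 6 0 (u129.trans t20.symm)) (by decide)
          · -- R 2 4 = 6
            have u130 : R 2 4 = 6 := t24
            exact absurd (inj 2 4 0 (u130.trans t20.symm)) (by decide)
        · -- R 1 6 = 5
          have u131 : R 1 6 = 5 := t16
          exact absurd (inj 1 6 2 (u131.trans t12.symm)) (by decide)
        · -- R 1 6 = 6
          have u132 : R 1 6 = 6 := t16
          exact absurd (inj 1 6 3 (u132.trans t13.symm)) (by decide)
      · -- R 1 4 = 3
        have u133 : R 1 4 = 3 := t14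
        exact absurd (inj 1 4 0 (u133.trans t10.symm)) (by decide)
      · -- R 1 4 = 4
        have t14 : R 1 4 = 4 := t14
        have u134 : R 4 1 = 4 := step 1 4 4 (by decide) t14
        exact absurd u134 (nfix 4 1 (by decide))
      · -- R 1 4 = 5
        have u135 : R 1 4 = 5 := t14
        exact absurd (inj 1 4 2 (u135.trans t12.symm)) (by decide)
      · -- R 1 4 = 6
        have u136 : R 1 4 = 6 := t14
        exact absurd (inj 1 4 3 (u136.trans t13.symm)) (by decide)
  · -- R 1 2 = 6
    have t12 : R 1 2 = 6 := t12
    have t61 : R 6 1 = 2 := step 1 2 6 (by decide) t12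
    have t26 : R 2 6 = 1 := step 6 1 2 (by decide) t61
    rcases seven (R 1 3) with t13|t13|t13|t13|t13|t13|t13
    · -- R 1 3 = 0
      have u137 : R 1 3 = 0 := t13
      exact absurd (inj 1 3 5 (u137.trans t15.symm)) (by decide)
    · -- R 1 3 = 1
      have u138 : R 1 3 = 1 := t13
      exact absurd u138 (nfix 1 3 (by decide))
    · -- R 1 3 = 2
      have t13 : R 1 3 = 2 := t13
      have t21 : R 2 1 = 3 := step 1 3 2 (by decide) t13
      have t32 : R 3 2 = 1 := step 2 1 3 (by decide) t21
      rcases seven (R 1 4) with t14|t14|t14|t14|t14|t14|t14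
      · -- R 1 4 = 0
        have u139 : R 1 4 = 0 := t14
        exact absurd (inj 1 4 5 (u139.trans t15.symm)) (by decide)
      · -- R 1 4 = 1
        have u140 : R 1 4 = 1 := t14
        exact absurd u140 (nfix 1 4 (by decide))
      · -- R 1 4 = 2
        have u141 : R 1 4 = 2 := t14
        exact absurd (inj 1 4 3 (u141.trans t13.symm)) (by decide)
      · -- R 1 4 = 3
        have u142 : R 1 4 = 3 := t14
        exact absurd (inj 1 4 0 (u142.trans t10.symm)) (by decide)
      · -- R 1 4 = 4
        have t14 : R 1 4 = 4 := t14
        have u143 : R 4 1 = 4 := step 1 4 4 (by decide) t14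
        exact absurd u143 (nfix 4 1 (by decide))
      · -- R 1 4 = 5
        have t14 : R 1 4 = 5 := t14
        have t51 : R 5 1 = 4 := step 1 4 5 (by decide) t14
        have t45 : R 4 5 = 1 := step 5 1 4 (by decide) t51
        rcases seven (R 1 6) with t16|t16|t16|t16|t16|t16|t16
        · -- R 1 6 = 0
          have u144 : R 1 6 = 0 := t16
          exact absurd (inj 1 6 5 (u144.trans t15.symm)) (by decide)
        · -- R 1 6 = 1
          have u145 : R 1 6 = 1 := t16
          exact absurd u145 (nfix 1 6 (by decide))
        · -- R 1 6 = 2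
          have u146 : R 1 6 = 2 := t16
          exact absurd (inj 1 6 3 (u146.trans t13.symm)) (by decide)
        · -- R 1 6 = 3
          have u147 : R 1 6 = 3 := t16
          exact absurd (inj 1 6 0 (u147.trans t10.symm)) (by decide)
        · -- R 1 6 = 4
          have t16 : R 1 6 = 4 := t16
          have t41 : R 4 1 = 6 := step 1 6 4 (by decide) t16
          have t64 : R 6 4 = 1 := step 4 1 6 (by decide) t41
          rcases seven (R 2 4) with t24|t24|t24|t24|t24|t24|t24
          · -- R 2 4 = 0
            have u148 : R 2 4 = 0 := t24
            exact absurd (inj 2 4 3 (u148.trans t23.symm)) (by decide)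
          · -- R 2 4 = 1
            have u149 : R 2 4 = 1 := t24
            exact absurd (inj 2 4 6 (u149.trans t26.symm)) (by decide)
          · -- R 2 4 = 2
            have u150 : R 2 4 = 2 := t24
            exact absurd u150 (nfix 2 4 (by decide))
          · -- R 2 4 = 3
            have u151 : R 2 4 = 3 := t24
            exact absurd (inj 2 4 1 (u151.trans t21.symm)) (by decide)
          · -- R 2 4 = 4
            have t24 : R 2 4 = 4 := t24
            have u152 : R 4 2 = 4 := step 2 4 4 (by decide) t24
            exact absurd u152 (nfix 4 2 (by decide))
          · -- R 2 4 = 5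
            have t24 : R 2 4 = 5 := t24
            have u153 : R 5 2 = 4 := step 2 4 5 (by decide) t24
            exact absurd (inj 5 2 1 (u153.trans t51.symm)) (by decide)
          · -- R 2 4 = 6
            have u154 : R 2 4 = 6 := t24
            exact absurd (inj 2 4 0 (u154.trans t20.symm)) (by decide)
        · -- R 1 6 = 5
          have u155 : R 1 6 = 5 := t16
          exact absurd (inj 1 6 4 (u155.trans t14.symm)) (by decide)
        · -- R 1 6 = 6
          have u156 : R 1 6 = 6 := t16
          exact absurd (inj 1 6 2 (u156.trans t12.symm)) (by decide)
      · -- R 1 4 = 6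
        have u157 : R 1 4 = 6 := t14
        exact absurd (inj 1 4 2 (u157.trans t12.symm)) (by decide)
    · -- R 1 3 = 3
      have u158 : R 1 3 = 3 := t13
      exact absurd (inj 1 3 0 (u158.trans t10.symm)) (by decide)
    · -- R 1 3 = 4
      have t13 : R 1 3 = 4 := t13
      have t41 : R 4 1 = 3 := step 1 3 4 (by decide) t13
      have t34 : R 3 4 = 1 := step 4 1 3 (by decide) t41
      rcases seven (R 1 4) with t14|t14|t14|t14|t14|t14|t14
      · -- R 1 4 = 0
        have u159 : R 1 4 = 0 := t14
        exact absurd (inj 1 4 5 (u159.trans t15.symm)) (by decide)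
      · -- R 1 4 = 1
        have u160 : R 1 4 = 1 := t14
        exact absurd u160 (nfix 1 4 (by decide))
      · -- R 1 4 = 2
        have t14 : R 1 4 = 2 := t14
        have t21 : R 2 1 = 4 := step 1 4 2 (by decide) t14
        have t42 : R 4 2 = 1 := step 2 1 4 (by decide) t21
        rcases seven (R 1 6) with t16|t16|t16|t16|t16|t16|t16
        · -- R 1 6 = 0
          have u161 : R 1 6 = 0 := t16
          exact absurd (inj 1 6 5 (u161.trans t15.symm)) (by decide)
        · -- R 1 6 = 1
          have u162 : R 1 6 = 1 := t16
          exact absurd u162 (nfix 1 6 (by decide))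
        · -- R 1 6 = 2
          have u163 : R 1 6 = 2 := t16
          exact absurd (inj 1 6 4 (u163.trans t14.symm)) (by decide)
        · -- R 1 6 = 3
          have u164 : R 1 6 = 3 := t16
          exact absurd (inj 1 6 0 (u164.trans t10.symm)) (by decide)
        · -- R 1 6 = 4
          have u165 : R 1 6 = 4 := t16
          exact absurd (inj 1 6 3 (u165.trans t13.symm)) (by decide)
        · -- R 1 6 = 5
          have t16 : R 1 6 = 5 := t16
          have t51 : R 5 1 = 6 := step 1 6 5 (by decide) t16
          have t65 : R 6 5 = 1 := step 5 1 6 (by decide) t51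
          rcases seven (R 2 4) with t24|t24|t24|t24|t24|t24|t24
          · -- R 2 4 = 0
            have u166 : R 2 4 = 0 := t24
            exact absurd (inj 2 4 3 (u166.trans t23.symm)) (by decide)
          · -- R 2 4 = 1
            have u167 : R 2 4 = 1 := t24
            exact absurd (inj 2 4 6 (u167.trans t26.symm)) (by decide)
          · -- R 2 4 = 2
            have u168 : R 2 4 = 2 := t24
            exact absurd u168 (nfix 2 4 (by decide))
          · -- R 2 4 = 3
            have t24 : R 2 4 = 3 := t24
            have t32 : R 3 2 = 4 := step 2 4 3 (by decide) t24
            have t43 : R 4 3 = 2 := step 3 2 4 (by decide) t32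
            rcases seven (R 2 5) with t25|t25|t25|t25|t25|t25|t25
            · -- R 2 5 = 0
              have u169 : R 2 5 = 0 := t25
              exact absurd (inj 2 5 3 (u169.trans t23.symm)) (by decide)
            · -- R 2 5 = 1
              have u170 : R 2 5 = 1 := t25
              exact absurd (inj 2 5 6 (u170.trans t26.symm)) (by decide)
            · -- R 2 5 = 2
              have u171 : R 2 5 = 2 := t25
              exact absurd u171 (nfix 2 5 (by decide))
            · -- R 2 5 = 3
              have u172 : R 2 5 = 3 := t25
              exact absurd (inj 2 5 4 (u172.trans t24.symm)) (by decide)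
            · -- R 2 5 = 4
              have u173 : R 2 5 = 4 := t25
              exact absurd (inj 2 5 1 (u173.trans t21.symm)) (by decide)
            · -- R 2 5 = 5
              have t25 : R 2 5 = 5 := t25
              have u174 : R 5 2 = 5 := step 2 5 5 (by decide) t25
              exact absurd u174 (nfix 5 2 (by decide))
            · -- R 2 5 = 6
              have u175 : R 2 5 = 6 := t25
              exact absurd (inj 2 5 0 (u175.trans t20.symm)) (by decide)
          · -- R 2 4 = 4
            have u176 : R 2 4 = 4 := t24
            exact absurd (inj 2 4 1 (u176.trans t21.symm)) (by decide)
          · -- R 2 4 = 5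
            have t24 : R 2 4 = 5 := t24
            have t52 : R 5 2 = 4 := step 2 4 5 (by decide) t24
            have t45 : R 4 5 = 2 := step 5 2 4 (by decide) t52
            rcases seven (R 2 5) with t25|t25|t25|t25|t25|t25|t25
            · -- R 2 5 = 0
              have u177 : R 2 5 = 0 := t25
              exact absurd (inj 2 5 3 (u177.trans t23.symm)) (by decide)
            · -- R 2 5 = 1
              have u178 : R 2 5 = 1 := t25
              exact absurd (inj 2 5 6 (u178.trans t26.symm)) (by decide)
            · -- R 2 5 = 2
              have u179 : R 2 5 = 2 := t25
              exact absurd u179 (nfix 2 5 (by decide))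
            · -- R 2 5 = 3
              have t25 : R 2 5 = 3 := t25
              have t32 : R 3 2 = 5 := step 2 5 3 (by decide) t25
              have t53 : R 5 3 = 2 := step 3 2 5 (by decide) t32
              rcases seven (R 3 5) with t35|t35|t35|t35|t35|t35|t35
              · -- R 3 5 = 0
                have u180 : R 3 5 = 0 := t35
                exact absurd (inj 3 5 1 (u180.trans t31.symm)) (by decide)
              · -- R 3 5 = 1
                have u181 : R 3 5 = 1 := t35
                exact absurd (inj 3 5 4 (u181.trans t34.symm)) (by decide)
              · -- R 3 5 = 2
                have u182 : R 3 5 = 2 := t35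
                exact absurd (inj 3 5 0 (u182.trans t30.symm)) (by decide)
              · -- R 3 5 = 3
                have u183 : R 3 5 = 3 := t35
                exact absurd u183 (nfix 3 5 (by decide))
              · -- R 3 5 = 4
                have t35 : R 3 5 = 4 := t35
                have u184 : R 4 3 = 5 := step 3 5 4 (by decide) t35
                exact absurd (inj 4 3 0 (u184.trans t40.symm)) (by decide)
              · -- R 3 5 = 5
                have u185 : R 3 5 = 5 := t35
                exact absurd (inj 3 5 2 (u185.trans t32.symm)) (by decide)
              · -- R 3 5 = 6
                have t35 : R 3 5 = 6 := t35
                have t63 : R 6 3 = 5 := step 3 5 6 (by decide) t35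
                have t56 : R 5 6 = 3 := step 6 3 5 (by decide) t63
                rcases seven (R 3 6) with t36|t36|t36|t36|t36|t36|t36
                · -- R 3 6 = 0
                  have u186 : R 3 6 = 0 := t36
                  exact absurd (inj 3 6 1 (u186.trans t31.symm)) (by decide)
                · -- R 3 6 = 1
                  have u187 : R 3 6 = 1 := t36
                  exact absurd (inj 3 6 4 (u187.trans t34.symm)) (by decide)
                · -- R 3 6 = 2
                  have u188 : R 3 6 = 2 := t36
                  exact absurd (inj 3 6 0 (u188.trans t30.symm)) (by decide)
                · -- R 3 6 = 3
                  have u189 : R 3 6 = 3 := t36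
                  exact absurd u189 (nfix 3 6 (by decide))
                · -- R 3 6 = 4
                  have t36 : R 3 6 = 4 := t36
                  have t43 : R 4 3 = 6 := step 3 6 4 (by decide) t36
                  have t64 : R 6 4 = 3 := step 4 3 6 (by decide) t43
                  refine Or.inl ?_
                  intro x y
                  rcases seven x with rfl|rfl|rfl|rfl|rfl|rfl|rfl <;>
                      rcases seven y with rfl|rfl|rfl|rfl|rfl|rfl|rfl
                  · exact t00.trans (by decide)
                  · exact t01.trans (by decide)
                  · exact t02.trans (by decide)
                  · exact t03.trans (by decide)
                  · exact t04.trans (by decide)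
                  · exact t05.trans (by decide)
                  · exact t06.trans (by decide)
                  · exact t10.trans (by decide)
                  · exact t11.trans (by decide)
                  · exact t12.trans (by decide)
                  · exact t13.trans (by decide)
                  · exact t14.trans (by decide)
                  · exact t15.trans (by decide)
                  · exact t16.trans (by decide)
                  · exact t20.trans (by decide)
                  · exact t21.trans (by decide)
                  · exact t22.trans (by decide)
                  · exact t23.trans (by decide)
                  · exact t24.trans (by decide)
                  · exact t25.trans (by decide)
                  · exact t26.trans (by decide)
                  · exact t30.trans (by decide)
                  · exact t31.trans (by decide)
                  · exact t32.trans (by decide)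
                  · exact t33.trans (by decide)
                  · exact t34.trans (by decide)
                  · exact t35.trans (by decide)
                  · exact t36.trans (by decide)
                  · exact t40.trans (by decide)
                  · exact t41.trans (by decide)
                  · exact t42.trans (by decide)
                  · exact t43.trans (by decide)
                  · exact t44.trans (by decide)
                  · exact t45.trans (by decide)
                  · exact t46.trans (by decide)
                  · exact t50.trans (by decide)
                  · exact t51.trans (by decide)
                  · exact t52.trans (by decide)
                  · exact t53.trans (by decide)
                  · exact t54.trans (by decide)
                  · exact t55.trans (by decide)
                  · exact t56.trans (by decide)
                  · exact t60.trans (by decide)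
                  · exact t61.trans (by decide)
                  · exact t62.trans (by decide)
                  · exact t63.trans (by decide)
                  · exact t64.trans (by decide)
                  · exact t65.trans (by decide)
                  · exact t66.trans (by decide)
                · -- R 3 6 = 5
                  have u190 : R 3 6 = 5 := t36
                  exact absurd (inj 3 6 2 (u190.trans t32.symm)) (by decide)
                · -- R 3 6 = 6
                  have u191 : R 3 6 = 6 := t36
                  exact absurd (inj 3 6 5 (u191.trans t35.symm)) (by decide)
            · -- R 2 5 = 4
              have u192 : R 2 5 = 4 := t25
              exact absurd (inj 2 5 1 (u192.trans t21.symm)) (by decide)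
            · -- R 2 5 = 5
              have u193 : R 2 5 = 5 := t25
              exact absurd (inj 2 5 4 (u193.trans t24.symm)) (by decide)
            · -- R 2 5 = 6
              have u194 : R 2 5 = 6 := t25
              exact absurd (inj 2 5 0 (u194.trans t20.symm)) (by decide)
          · -- R 2 4 = 6
            have u195 : R 2 4 = 6 := t24
            exact absurd (inj 2 4 0 (u195.trans t20.symm)) (by decide)
        · -- R 1 6 = 6
          have u196 : R 1 6 = 6 := t16
          exact absurd (inj 1 6 2 (u196.trans t12.symm)) (by decide)
      · -- R 1 4 = 3
        have u197 : R 1 4 = 3 := t14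
        exact absurd (inj 1 4 0 (u197.trans t10.symm)) (by decide)
      · -- R 1 4 = 4
        have u198 : R 1 4 = 4 := t14
        exact absurd (inj 1 4 3 (u198.trans t13.symm)) (by decide)
      · -- R 1 4 = 5
        have t14 : R 1 4 = 5 := t14
        have t51 : R 5 1 = 4 := step 1 4 5 (by decide) t14
        have t45 : R 4 5 = 1 := step 5 1 4 (by decide) t51
        rcases seven (R 1 6) with t16|t16|t16|t16|t16|t16|t16
        · -- R 1 6 = 0
          have u199 : R 1 6 = 0 := t16
          exact absurd (inj 1 6 5 (u199.trans t15.symm)) (by decide)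
        · -- R 1 6 = 1
          have u200 : R 1 6 = 1 := t16
          exact absurd u200 (nfix 1 6 (by decide))
        · -- R 1 6 = 2
          have t16 : R 1 6 = 2 := t16
          have u201 : R 2 1 = 6 := step 1 6 2 (by decide) t16
          exact absurd (inj 2 1 0 (u201.trans t20.symm)) (by decide)
        · -- R 1 6 = 3
          have u202 : R 1 6 = 3 := t16
          exact absurd (inj 1 6 0 (u202.trans t10.symm)) (by decide)
        · -- R 1 6 = 4
          have u203 : R 1 6 = 4 := t16
          exact absurd (inj 1 6 3 (u203.trans t13.symm)) (by decide)
        · -- R 1 6 = 5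
          have u204 : R 1 6 = 5 := t16
          exact absurd (inj 1 6 4 (u204.trans t14.symm)) (by decide)
        · -- R 1 6 = 6
          have u205 : R 1 6 = 6 := t16
          exact absurd (inj 1 6 2 (u205.trans t12.symm)) (by decide)
      · -- R 1 4 = 6
        have u206 : R 1 4 = 6 := t14
        exact absurd (inj 1 4 2 (u206.trans t12.symm)) (by decide)
    · -- R 1 3 = 5
      have t13 : R 1 3 = 5 := t13
      have t51 : R 5 1 = 3 := step 1 3 5 (by decide) t13
      have t35 : R 3 5 = 1 := step 5 1 3 (by decide) t51
      rcases seven (R 1 4) with t14|t14|t14|t14|t14|t14|t14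
      · -- R 1 4 = 0
        have u207 : R 1 4 = 0 := t14
        exact absurd (inj 1 4 5 (u207.trans t15.symm)) (by decide)
      · -- R 1 4 = 1
        have u208 : R 1 4 = 1 := t14
        exact absurd u208 (nfix 1 4 (by decide))
      · -- R 1 4 = 2
        have t14 : R 1 4 = 2 := t14
        have t21 : R 2 1 = 4 := step 1 4 2 (by decide) t14
        have t42 : R 4 2 = 1 := step 2 1 4 (by decide) t21
        rcases seven (R 1 6) with t16|t16|t16|t16|t16|t16|t16
        · -- R 1 6 = 0
          have u209 : R 1 6 = 0 := t16
          exact absurd (inj 1 6 5 (u209.trans t15.symm)) (by decide)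
        · -- R 1 6 = 1
          have u210 : R 1 6 = 1 := t16
          exact absurd u210 (nfix 1 6 (by decide))
        · -- R 1 6 = 2
          have u211 : R 1 6 = 2 := t16
          exact absurd (inj 1 6 4 (u211.trans t14.symm)) (by decide)
        · -- R 1 6 = 3
          have u212 : R 1 6 = 3 := t16
          exact absurd (inj 1 6 0 (u212.trans t10.symm)) (by decide)
        · -- R 1 6 = 4
          have t16 : R 1 6 = 4 := t16
          have t41 : R 4 1 = 6 := step 1 6 4 (by decide) t16
          have t64 : R 6 4 = 1 := step 4 1 6 (by decide) t41
          rcases seven (R 2 4) with t24|t24|t24|t24|t24|t24|t24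
          · -- R 2 4 = 0
            have u213 : R 2 4 = 0 := t24
            exact absurd (inj 2 4 3 (u213.trans t23.symm)) (by decide)
          · -- R 2 4 = 1
            have u214 : R 2 4 = 1 := t24
            exact absurd (inj 2 4 6 (u214.trans t26.symm)) (by decide)
          · -- R 2 4 = 2
            have u215 : R 2 4 = 2 := t24
            exact absurd u215 (nfix 2 4 (by decide))
          · -- R 2 4 = 3
            have t24 : R 2 4 = 3 := t24
            have t32 : R 3 2 = 4 := step 2 4 3 (by decide) t24
            have t43 : R 4 3 = 2 := step 3 2 4 (by decide) t32
            rcases seven (R 2 5) with t25|t25|t25|t25|t25|t25|t25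
            · -- R 2 5 = 0
              have u216 : R 2 5 = 0 := t25
              exact absurd (inj 2 5 3 (u216.trans t23.symm)) (by decide)
            · -- R 2 5 = 1
              have u217 : R 2 5 = 1 := t25
              exact absurd (inj 2 5 6 (u217.trans t26.symm)) (by decide)
            · -- R 2 5 = 2
              have u218 : R 2 5 = 2 := t25
              exact absurd u218 (nfix 2 5 (by decide))
            · -- R 2 5 = 3
              have u219 : R 2 5 = 3 := t25
              exact absurd (inj 2 5 4 (u219.trans t24.symm)) (by decide)
            · -- R 2 5 = 4
              have u220 : R 2 5 = 4 := t25
              exact absurd (inj 2 5 1 (u220.trans t21.symm)) (by decide)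
            · -- R 2 5 = 5
              have t25 : R 2 5 = 5 := t25
              have u221 : R 5 2 = 5 := step 2 5 5 (by decide) t25
              exact absurd u221 (nfix 5 2 (by decide))
            · -- R 2 5 = 6
              have u222 : R 2 5 = 6 := t25
              exact absurd (inj 2 5 0 (u222.trans t20.symm)) (by decide)
          · -- R 2 4 = 4
            have u223 : R 2 4 = 4 := t24
            exact absurd (inj 2 4 1 (u223.trans t21.symm)) (by decide)
          · -- R 2 4 = 5
            have t24 : R 2 4 = 5 := t24
            have t52 : R 5 2 = 4 := step 2 4 5 (by decide) t24
            have t45 : R 4 5 = 2 := step 5 2 4 (by decide) t52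
            rcases seven (R 2 5) with t25|t25|t25|t25|t25|t25|t25
            · -- R 2 5 = 0
              have u224 : R 2 5 = 0 := t25
              exact absurd (inj 2 5 3 (u224.trans t23.symm)) (by decide)
            · -- R 2 5 = 1
              have u225 : R 2 5 = 1 := t25
              exact absurd (inj 2 5 6 (u225.trans t26.symm)) (by decide)
            · -- R 2 5 = 2
              have u226 : R 2 5 = 2 := t25
              exact absurd u226 (nfix 2 5 (by decide))
            · -- R 2 5 = 3
              have t25 : R 2 5 = 3 := t25
              have t32 : R 3 2 = 5 := step 2 5 3 (by decide) t25
              have t53 : R 5 3 = 2 := step 3 2 5 (by decide) t32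
              rcases seven (R 3 4) with t34|t34|t34|t34|t34|t34|t34
              · -- R 3 4 = 0
                have u227 : R 3 4 = 0 := t34
                exact absurd (inj 3 4 1 (u227.trans t31.symm)) (by decide)
              · -- R 3 4 = 1
                have u228 : R 3 4 = 1 := t34
                exact absurd (inj 3 4 5 (u228.trans t35.symm)) (by decide)
              · -- R 3 4 = 2
                have u229 : R 3 4 = 2 := t34
                exact absurd (inj 3 4 0 (u229.trans t30.symm)) (by decide)
              · -- R 3 4 = 3
                have u230 : R 3 4 = 3 := t34
                exact absurd u230 (nfix 3 4 (by decide))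
              · -- R 3 4 = 4
                have t34 : R 3 4 = 4 := t34
                have u231 : R 4 3 = 4 := step 3 4 4 (by decide) t34
                exact absurd u231 (nfix 4 3 (by decide))
              · -- R 3 4 = 5
                have u232 : R 3 4 = 5 := t34
                exact absurd (inj 3 4 2 (u232.trans t32.symm)) (by decide)
              · -- R 3 4 = 6
                have t34 : R 3 4 = 6 := t34
                have u233 : R 6 3 = 4 := step 3 4 6 (by decide) t34
                exact absurd (inj 6 3 0 (u233.trans t60.symm)) (by decide)
            · -- R 2 5 = 4
              have u234 : R 2 5 = 4 := t25
              exact absurd (inj 2 5 1 (u234.trans t21.symm)) (by decide)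
            · -- R 2 5 = 5
              have u235 : R 2 5 = 5 := t25
              exact absurd (inj 2 5 4 (u235.trans t24.symm)) (by decide)
            · -- R 2 5 = 6
              have u236 : R 2 5 = 6 := t25
              exact absurd (inj 2 5 0 (u236.trans t20.symm)) (by decide)
          · -- R 2 4 = 6
            have u237 : R 2 4 = 6 := t24
            exact absurd (inj 2 4 0 (u237.trans t20.symm)) (by decide)
        · -- R 1 6 = 5
          have u238 : R 1 6 = 5 := t16
          exact absurd (inj 1 6 3 (u238.trans t13.symm)) (by decide)
        · -- R 1 6 = 6
          have u239 : R 1 6 = 6 := t16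
          exact absurd (inj 1 6 2 (u239.trans t12.symm)) (by decide)
      · -- R 1 4 = 3
        have u240 : R 1 4 = 3 := t14
        exact absurd (inj 1 4 0 (u240.trans t10.symm)) (by decide)
      · -- R 1 4 = 4
        have t14 : R 1 4 = 4 := t14
        have u241 : R 4 1 = 4 := step 1 4 4 (by decide) t14
        exact absurd u241 (nfix 4 1 (by decide))
      · -- R 1 4 = 5
        have u242 : R 1 4 = 5 := t14
        exact absurd (inj 1 4 3 (u242.trans t13.symm)) (by decide)
      · -- R 1 4 = 6
        have u243 : R 1 4 = 6 := t14
        exact absurd (inj 1 4 2 (u243.trans t12.symm)) (by decide)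
    · -- R 1 3 = 6
      have u244 : R 1 3 = 6 := t13
      exact absurd (inj 1 3 2 (u244.trans t12.symm)) (by decide)
/-- Every triangular combinatorial embedding of `K7` is isomorphic to the
classical toroidal embedding `ρ_x(y) = 5y - 4x`; in particular, under the
isomorphism, its 14 triangular faces are exactly the blocks of the two
orthogonal Fano planes `fanoB1` and `fanoB2`. -/
theorem triangular_embedding_K7_iso_classical
    (ρ : ZMod 7 → Equiv.Perm (ZMod 7)) (hrot : IsRotationK7 ρ)
    (htri : ∀ x y : ZMod 7, x ≠ y → ρ (ρ x y) x = y) :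
    ∃ σ : Equiv.Perm (ZMod 7),
      ((∀ x y : ZMod 7, σ (ρ x y) = rhoClass (σ x) (σ y)) ∨
       (∀ x y : ZMod 7, σ (ρ x y) = (rhoClass (σ x))⁻¹ (σ y))) ∧
      (∀ x y : ZMod 7, x ≠ y →
        ({σ x, σ y, σ (ρ x y)} : Finset (ZMod 7)) ∈ fanoB1 ∪ fanoB2) ∧
      (∀ t ∈ fanoB1 ∪ fanoB2, ∃ x y : ZMod 7, x ≠ y ∧
        ({σ x, σ y, σ (ρ x y)} : Finset (ZMod 7)) = t) := by
  obtain ⟨hr00, hr0⟩ := hrot 0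
  set r : Equiv.Perm (ZMod 7) := ρ 0 with hrdef
  have hpow0 : ∀ k : ℕ, (r ^ k) (0 : ZMod 7) = 0 := by
    intro k
    induction k with
    | zero => rfl
    | succ n ih => rw [pow_succ, Equiv.Perm.mul_apply, hr00, ih]
  have hne0 : ∀ k : ℕ, (r ^ k) (1 : ZMod 7) ≠ 0 := by
    intro k h
    have := (r ^ k).injective (h.trans (hpow0 k).symm)
    exact absurd this (by decide)
  have hcyc : ∀ z : ZMod 7, z ≠ 0 → ∃ k : ℕ, (r ^ k) (1 : ZMod 7) = z :=
    fun z hz => (hr0 1 (by decide)).2 z hz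
  have pow_ne_one : ∀ d : ℕ, 1 ≤ d → d ≤ 5 → (r ^ d) (1 : ZMod 7) ≠ 1 := by
    intro d hd1 hd5 hd
    have hperiod : ∀ a b : ℕ, (r ^ (b + a * d)) (1 : ZMod 7) = (r ^ b) 1 := by
      intro a
      induction a with
      | zero => intro b; simp
      | succ n ih =>
        intro b
        rw [show b + (n + 1) * d = (b + n * d) + d by ring, pow_add,
          Equiv.Perm.mul_apply, hd, ih]
    have hmem : ∀ z : ZMod 7, z ≠ 0 →
        z ∈ (Finset.range d).image (fun i => (r ^ i) (1 : ZMod 7)) := by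
      intro z hz
      obtain ⟨k, hk⟩ := hcyc z hz
      refine Finset.mem_image.mpr ⟨k % d, Finset.mem_range.mpr (Nat.mod_lt _ (by omega)), ?_⟩
      have h2 : (r ^ (k % d + (k / d) * d)) (1 : ZMod 7) = (r ^ (k % d)) 1 :=
        hperiod (k / d) (k % d)
      rw [Nat.mod_add_div' k d] at h2
      exact h2.symm.trans hk
    have hsub : Finset.univ.erase (0 : ZMod 7) ⊆
        (Finset.range d).image (fun i => (r ^ i) (1 : ZMod 7)) :=
      fun z hz => hmem z (Finset.ne_of_mem_erase hz)
    have hcard := Finset.card_le_card hsub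
    have h1 : (Finset.univ.erase (0 : ZMod 7)).card = 6 := by decide
    have h2 := Finset.card_image_le (s := Finset.range d)
      (f := fun i => (r ^ i) (1 : ZMod 7))
    rw [Finset.card_range] at h2
    omega
  have dist : ∀ j k : ℕ, j ≤ 5 → k ≤ 5 → (r ^ j) (1 : ZMod 7) = (r ^ k) 1 → j = k := by
    have main : ∀ j k : ℕ, j ≤ k → k ≤ 5 → (r ^ j) (1 : ZMod 7) = (r ^ k) 1 → j = k := by
      intro j k hle hk h
      have h1 : (r ^ j) ((r ^ (k - j)) (1 : ZMod 7)) = (r ^ j) 1 := by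
        rw [← Equiv.Perm.mul_apply, ← pow_add, show j + (k - j) = k by omega]
        exact h.symm
      have h2 := (r ^ j).injective h1
      by_contra hne
      exact pow_ne_one (k - j) (by omega) (by omega) h2
    intro j k hj hk h
    rcases Nat.le_total j k with hle | hle
    · exact main j k hle hk h
    · exact (main k j hle hj h.symm).symm
  have r6 : (r ^ 6) (1 : ZMod 7) = 1 := by
    have hinj6 : Set.InjOn (fun i => (r ^ i) (1 : ZMod 7)) (Finset.range 6) := by
      intro a ha b hb hab
      have ha' : a < 6 := Finset.mem_range.mp (Finset.mem_coe.mp ha)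
      have hb' : b < 6 := Finset.mem_range.mp (Finset.mem_coe.mp hb)
      exact dist a b (by omega) (by omega) hab
    have hcard2 : ((Finset.range 6).image (fun i => (r ^ i) (1 : ZMod 7))).card = 6 := by
      rw [Finset.card_image_of_injOn hinj6, Finset.card_range]
    have hsub2 : (Finset.range 6).image (fun i => (r ^ i) (1 : ZMod 7)) ⊆
        Finset.univ.erase 0 := by
      intro z hz
      obtain ⟨i, _, hiz⟩ := Finset.mem_image.mp hz
      exact Finset.mem_erase.mpr ⟨hiz ▸ hne0 i, Finset.mem_univ z⟩
    have heq : (Finset.range 6).image (fun i => (r ^ i) (1 : ZMod 7)) =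
        Finset.univ.erase 0 :=
      Finset.eq_of_subset_of_card_le hsub2 (by rw [hcard2]; decide)
    have hmem6 : (r ^ 6) (1 : ZMod 7) ∈
        (Finset.range 6).image (fun i => (r ^ i) (1 : ZMod 7)) := by
      rw [heq]; exact Finset.mem_erase.mpr ⟨hne0 6, Finset.mem_univ _⟩
    obtain ⟨k, hk6, hk⟩ := Finset.mem_image.mp hmem6
    have hk5 : k < 6 := Finset.mem_range.mp hk6
    rcases Nat.eq_zero_or_pos k with rfl | hkpos
    · rw [pow_zero] at hk
      exact hk.symm.trans rfl
    · exfalso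
      have h1 : (r ^ k) ((r ^ (6 - k)) (1 : ZMod 7)) = (r ^ k) 1 := by
        rw [← Equiv.Perm.mul_apply, ← pow_add, show k + (6 - k) = 6 by omega]
        exact hk.symm
      exact pow_ne_one (6 - k) (by omega) (by omega) ((r ^ k).injective h1)
  -- the relabeling map
  set f : ZMod 7 → ZMod 7 := fun x => if x = 0 then 0 else (r ^ dlog x) 1 with hfdef
  have fval : ∀ x : ZMod 7, x ≠ 0 → f x = (r ^ dlog x) 1 := fun x hx => if_neg hx
  have f0 : f 0 = 0 := if_pos rfl
  have finj : Function.Injective f := by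
    intro a b hab
    by_cases ha : a = 0 <;> by_cases hb : b = 0
    · rw [ha, hb]
    · rw [ha, f0] at hab
      exact absurd ((fval b hb).symm.trans hab.symm) (hne0 (dlog b))
    · rw [hb, f0] at hab
      exact absurd ((fval a ha).symm.trans hab) (hne0 (dlog a))
    · rw [fval a ha, fval b hb] at hab
      have hdle : ∀ x : ZMod 7, dlog x ≤ 5 := by decide
      have hd : dlog a = dlog b := dist _ _ (hdle a) (hdle b) hab
      have hdinj : ∀ x y : ZMod 7, x ≠ 0 → y ≠ 0 → dlog x = dlog y → x = y := by decide
      exact hdinj a b ha hb hd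
  set e : Equiv.Perm (ZMod 7) :=
    Equiv.ofBijective f (Finite.injective_iff_bijective.mp finj) with hedef
  have heapp : ∀ x : ZMod 7, e x = f x := fun x => rfl
  have hrp : ∀ j : ℕ, r ((r ^ j) (1 : ZMod 7)) = (r ^ (j + 1)) 1 := by
    intro j
    rw [pow_succ']
    rfl
  have hre : ∀ y : ZMod 7, r (f y) = f (5 * y) := by
    intro y
    have seven : ∀ z : ZMod 7, z = 0 ∨ z = 1 ∨ z = 2 ∨ z = 3 ∨ z = 4 ∨ z = 5 ∨ z = 6 := by
      decide
    rcases seven y with rfl | rfl | rfl | rfl | rfl | rfl | rfl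
    · rw [show (5 * 0 : ZMod 7) = 0 by decide, f0, hr00]
    · rw [fval 1 (by decide), fval (5 * 1) (by decide), hrp,
        show dlog (1 : ZMod 7) + 1 = dlog (5 * 1 : ZMod 7) by decide]
    · rw [fval 2 (by decide), fval (5 * 2) (by decide), hrp,
        show dlog (2 : ZMod 7) + 1 = dlog (5 * 2 : ZMod 7) by decide]
    · rw [fval 3 (by decide), fval (5 * 3) (by decide), hrp,
        show dlog (3 : ZMod 7) + 1 = 6 by decide,
        show dlog (5 * 3 : ZMod 7) = 0 by decide, pow_zero, r6]
      rfl
    · rw [fval 4 (by decide), fval (5 * 4) (by decide), hrp,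
        show dlog (4 : ZMod 7) + 1 = dlog (5 * 4 : ZMod 7) by decide]
    · rw [fval 5 (by decide), fval (5 * 5) (by decide), hrp,
        show dlog (5 : ZMod 7) + 1 = dlog (5 * 5 : ZMod 7) by decide]
    · rw [fval 6 (by decide), fval (5 * 6) (by decide), hrp,
        show dlog (6 : ZMod 7) + 1 = dlog (5 * 6 : ZMod 7) by decide]
  -- the conjugated rotation system
  have hfix : ∀ a : ZMod 7, e.symm (ρ (e a) (e a)) = a := by
    intro a
    rw [(hrot (e a)).1, Equiv.symm_apply_apply]
  have hnfix : ∀ a b : ZMod 7, a ≠ b → e.symm (ρ (e a) (e b)) ≠ a := by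
    intro a b hab h
    have h2 : ρ (e a) (e b) = e a := by
      have := congrArg e h
      rwa [Equiv.apply_symm_apply] at this
    exact ((hrot (e a)).2 (e b) (fun hc => hab (e.injective hc).symm)).1 h2
  have hinj : ∀ a b c : ZMod 7,
      e.symm (ρ (e a) (e b)) = e.symm (ρ (e a) (e c)) → b = c := by
    intro a b c h
    exact e.injective ((ρ (e a)).injective (e.symm.injective h))
  have hstep : ∀ a b c : ZMod 7, a ≠ b → e.symm (ρ (e a) (e b)) = c →
      e.symm (ρ (e c) (e a)) = b := by
    intro a b c hab h
    have h2 : ρ (e a) (e b) = e c := by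
      have := congrArg e h
      rwa [Equiv.apply_symm_apply] at this
    have h3 := htri (e a) (e b) (fun hc => hab (e.injective hc))
    rw [h2] at h3
    rw [h3, Equiv.symm_apply_apply]
  have hbase : ∀ y : ZMod 7, e.symm (ρ (e 0) (e y)) = 5 * y := by
    intro y
    have h0 : e 0 = 0 := f0
    have h1 : r (e y) = e (5 * y) := hre y
    rw [h0, ← hrdef, h1, Equiv.symm_apply_apply]
  rcases key (fun a b => e.symm (ρ (e a) (e b))) hfix hnfix hinj hstep hbase with H | H
  · -- classical orientation
    have heq : ∀ x y : ZMod 7, e.symm (ρ x y) = rhoClass (e.symm x) (e.symm y) := by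
      intro x y
      have h := H (e.symm x) (e.symm y)
      simp only [Equiv.apply_symm_apply] at h
      exact h
    refine ⟨e.symm, Or.inl heq, ?_, ?_⟩
    · intro x y hxy
      rw [heq x y]
      exact faceA _ _ (fun h => hxy (e.symm.injective h))
    · intro t ht
      obtain ⟨u, v, huv, hblk⟩ := surjA t ht
      refine ⟨e u, e v, fun h => huv (e.injective h), ?_⟩
      rw [heq (e u) (e v), Equiv.symm_apply_apply, Equiv.symm_apply_apply]
      exact hblk
  · -- mirror orientation
    set σ : Equiv.Perm (ZMod 7) := e.symm.trans piMir with hσdef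
    have hσ : ∀ x : ZMod 7, σ x = piMir (e.symm x) := fun x => rfl
    have heq : ∀ x y : ZMod 7, σ (ρ x y) = (rhoClass (σ x))⁻¹ (σ y) := by
      intro x y
      have h := H (e.symm x) (e.symm y)
      simp only [Equiv.apply_symm_apply] at h
      rw [hσ, h, bridgeB, ← hσ, ← hσ]
    refine ⟨σ, Or.inr heq, ?_, ?_⟩
    · intro x y hxy
      rw [heq x y]
      exact faceB _ _ (fun h => hxy (σ.injective h))
    · intro t ht
      obtain ⟨u, v, huv, hblk⟩ := surjB t ht
      refine ⟨σ.symm u, σ.symm v, fun h => huv (σ.symm.injective h), ?_⟩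
      rw [heq (σ.symm u) (σ.symm v), Equiv.apply_symm_apply, Equiv.apply_symm_apply]
      exact hblk
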